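/- Let α > 0 and let x > 0. Then the left-sided Riemann–Liouville fractional integral of order α (with base point 0) of the Gaussian function τ ↦ exp(-τ²/2) satisfies (1/Γ(α)) ∫_0^x (x - τ)^(α-1) exp(-τ²/2) dτ = Σ_{n=0}^{∞} ((-1)^n (2n)! / (2^n · n! · Γ(2n + α + 1))) · x^(2n+α), where the series on the right converges absolutely. -/

import Mathlib

open MeasureTheory Real


lemma rl_beta_aux (α : ℝ) (hα : 0 < α) {x : ℝ} (hx : 0 < x) (k : ℕ) :
    ∫ τ in (0:ℝ)..x, τ ^ k * (x - τ) ^ (α - 1) =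
      Real.Gamma α * k.factorial / Real.Gamma (k + α + 1) * x ^ ((k:ℝ) + α) := by
  have key := Complex.betaIntegral_scaled ((k : ℂ) + 1) (α : ℂ) hx
  have hbeta : Complex.betaIntegral ((k : ℂ) + 1) (α : ℂ) =
      Complex.Gamma ((k : ℂ) + 1) * Complex.Gamma (α : ℂ) /
        Complex.Gamma ((k : ℂ) + 1 + (α : ℂ)) := by
    have h1 : (0:ℝ) < ((k : ℂ) + 1).re := by simp; positivity
    have h2 : (0:ℝ) < ((α : ℂ)).re := by simpa using hα
    have h3 : Complex.Gamma ((k : ℂ) + 1 + (α : ℂ)) ≠ 0 := by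
      apply Complex.Gamma_ne_zero_of_re_pos
      simp only [Complex.add_re, Complex.one_re, Complex.natCast_re, Complex.ofReal_re]
      positivity
    rw [eq_div_iff h3, mul_comm, ← Complex.Gamma_mul_Gamma_eq_betaIntegral h1 h2]
  have hlhs : (∫ τ in (0:ℝ)..x, (τ:ℂ) ^ ((k:ℂ) + 1 - 1) * ((x:ℂ) - τ) ^ ((α:ℂ) - 1)) =
      ((∫ τ in (0:ℝ)..x, τ ^ k * (x - τ) ^ (α - 1) : ℝ) : ℂ) := by
    rw [← intervalIntegral.integral_ofReal]
    refine intervalIntegral.integral_congr fun τ hτ => ?_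
    rw [Set.uIcc_of_le hx.le] at hτ
    have h1 : ((k:ℂ) + 1 - 1) = (k : ℂ) := by ring
    have h2 : ((x:ℂ) - τ) = ((x - τ : ℝ) : ℂ) := by push_cast; ring
    have h3 : ((α:ℂ) - 1) = ((α - 1 : ℝ) : ℂ) := by push_cast; ring
    rw [h1, h2, h3, Complex.cpow_natCast, ← Complex.ofReal_cpow (by linarith [hτ.2])]
    push_cast
    ring
  rw [hlhs, hbeta] at key
  have hxpow : ((x:ℂ)) ^ ((k:ℂ) + 1 + (α:ℂ) - 1) = ((x ^ ((k:ℝ) + α) : ℝ) : ℂ) := by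
    have : ((k:ℂ) + 1 + (α:ℂ) - 1) = (((k:ℝ) + α : ℝ) : ℂ) := by push_cast; ring
    rw [this, Complex.ofReal_cpow hx.le]
  have hgk : Complex.Gamma ((k : ℂ) + 1) = (k.factorial : ℂ) := by
    exact_mod_cast Complex.Gamma_nat_eq_factorial k
  have hgka : Complex.Gamma ((k : ℂ) + 1 + (α:ℂ)) = ((Real.Gamma ((k:ℝ) + α + 1) : ℝ) : ℂ) := by
    have : ((k : ℂ) + 1 + (α:ℂ)) = (((k:ℝ) + α + 1 : ℝ) : ℂ) := by push_cast; ring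
    rw [this, Complex.Gamma_ofReal]
  rw [hxpow, hgk, hgka, Complex.Gamma_ofReal] at key
  have final : ∫ τ in (0:ℝ)..x, τ ^ k * (x - τ) ^ (α - 1) =
      x ^ ((k:ℝ) + α) * ((k.factorial : ℝ) * Real.Gamma α / Real.Gamma ((k:ℝ) + α + 1)) := by
    exact_mod_cast key
  rw [final]
  ring


theorem rl_integral_gaussian_zero (α : ℝ) (hα : 0 < α) (x : ℝ) (hx : 0 < x) :
    Summable (fun n : ℕ =>
      ((-1 : ℝ) ^ n * (2 * n).factorial /
        (2 ^ n * n.factorial * Real.Gamma (2 * n + α + 1))) * x ^ (2 * (n : ℝ) + α)) ∧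
    (1 / Real.Gamma α) * ∫ τ in (0 : ℝ)..x, (x - τ) ^ (α - 1) * Real.exp (-τ ^ 2 / 2) =
      ∑' n : ℕ,
        ((-1 : ℝ) ^ n * (2 * n).factorial /
          (2 ^ n * n.factorial * Real.Gamma (2 * n + α + 1))) * x ^ (2 * (n : ℝ) + α) := by
  set a : ℕ → ℝ := fun n =>
    ((-1 : ℝ) ^ n * (2 * n).factorial /
      (2 ^ n * n.factorial * Real.Gamma (2 * n + α + 1))) * x ^ (2 * (n : ℝ) + α) with ha
  set g : ℕ → ℝ → ℝ := fun n τ =>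
    (((-1 : ℝ) ^ n / (2 ^ n * n.factorial)) * (τ ^ (2 * n) * (x - τ) ^ (α - 1))) with hg
  -- integrability of the base rpow factor
  have hbase : IntegrableOn (fun τ => (x - τ) ^ (α - 1)) (Set.Ioc 0 x) := by
    have h1 : IntervalIntegrable (fun t : ℝ => t ^ (α - 1)) volume 0 x :=
      intervalIntegral.intervalIntegrable_rpow' (by linarith)
    have h2 := h1.comp_sub_left x
    simp only [sub_zero, sub_self] at h2
    rw [← intervalIntegrable_iff_integrableOn_Ioc_of_le hx.le]
    exact h2.symm
  -- integrability of each g n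
  have hint : ∀ n : ℕ, IntegrableOn (g n) (Set.Ioc 0 x) := by
    intro n
    apply Integrable.const_mul
    apply hbase.bdd_mul (c := x ^ (2 * n))
    · exact (continuous_pow _).aestronglyMeasurable
    · rw [ae_restrict_iff' measurableSet_Ioc]
      filter_upwards with τ hτ
      rw [Real.norm_eq_abs, abs_pow, abs_of_nonneg hτ.1.le]
      exact pow_le_pow_left₀ (le_of_lt hτ.1) hτ.2 _
  -- positivity facts
  have hfac : ∀ n : ℕ, (0:ℝ) < 2 ^ n * n.factorial := by
    intro n; positivity
  -- value of ∫ g n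
  have hval : ∀ n : ℕ, ∫ τ in Set.Ioc 0 x, g n τ = Real.Gamma α * a n := by
    intro n
    rw [MeasureTheory.integral_const_mul, ← intervalIntegral.integral_of_le hx.le,
      rl_beta_aux α hα hx (2 * n)]
    have hΓpos : (0:ℝ) < Real.Gamma ((2 * n : ℕ) + α + 1) :=
      Real.Gamma_pos_of_pos (by positivity)
    have hcast : ((2 * n : ℕ) : ℝ) = 2 * (n : ℝ) := by push_cast; ring
    rw [ha]
    simp only [hcast] at hΓpos ⊢
    field_simp
  -- norm integrals
  have hnorm : ∀ n : ℕ, ∫ τ in Set.Ioc 0 x, ‖g n τ‖ =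
      (1 / (2 ^ n * n.factorial)) *
        (Real.Gamma α * (2 * n).factorial / Real.Gamma ((2 * n : ℕ) + α + 1) *
          x ^ (((2 * n : ℕ) : ℝ) + α)) := by
    intro n
    rw [show ∫ τ in Set.Ioc 0 x, ‖g n τ‖ =
        ∫ τ in Set.Ioc 0 x, (1 / (2 ^ n * n.factorial)) * (τ ^ (2 * n) * (x - τ) ^ (α - 1))
      from setIntegral_congr_fun measurableSet_Ioc fun τ hτ => by
        rw [hg]
        simp only [Real.norm_eq_abs, abs_mul]
        rw [abs_div, abs_pow, abs_neg, abs_one, one_pow, abs_of_pos (hfac n),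
          abs_of_nonneg (pow_nonneg hτ.1.le _),
          abs_of_nonneg (Real.rpow_nonneg (by linarith [hτ.2]) _)]]
    rw [MeasureTheory.integral_const_mul, ← intervalIntegral.integral_of_le hx.le,
      rl_beta_aux α hα hx (2 * n)]
  -- summability of norm integrals
  have hC : (0:ℝ) ≤ ∫ τ in Set.Ioc 0 x, (x - τ) ^ (α - 1) :=
    setIntegral_nonneg measurableSet_Ioc fun τ hτ =>
      Real.rpow_nonneg (by linarith [hτ.2]) _
  have hS1 : Summable (fun n : ℕ => ∫ τ in Set.Ioc 0 x, ‖g n τ‖) := by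
    refine Summable.of_nonneg_of_le
      (fun n => integral_nonneg fun τ => norm_nonneg _) ?_
      ((Real.summable_pow_div_factorial (x ^ 2 / 2)).mul_right
        (∫ τ in Set.Ioc 0 x, (x - τ) ^ (α - 1)))
    · intro n
      have hle : ∫ τ in Set.Ioc 0 x, ‖g n τ‖ ≤
          ∫ τ in Set.Ioc 0 x, (x ^ (2 * n) / (2 ^ n * n.factorial)) * (x - τ) ^ (α - 1) := by
        apply setIntegral_mono_on ((hint n).norm)
          ((hbase.const_mul _)) measurableSet_Ioc
        intro τ hτ
        rw [hg]
        have hR : (0:ℝ) ≤ (x - τ) ^ (α - 1) := Real.rpow_nonneg (by linarith [hτ.2]) _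
        simp only [Real.norm_eq_abs, abs_mul]
        rw [abs_div, abs_pow, abs_neg, abs_one, one_pow, abs_of_pos (hfac n),
          abs_of_nonneg (pow_nonneg hτ.1.le _), abs_of_nonneg hR]
        calc 1 / (2 ^ n * (n.factorial:ℝ)) * (τ ^ (2 * n) * (x - τ) ^ (α - 1))
            = τ ^ (2 * n) * (x - τ) ^ (α - 1) / (2 ^ n * (n.factorial:ℝ)) := by ring
          _ ≤ x ^ (2 * n) * (x - τ) ^ (α - 1) / (2 ^ n * (n.factorial:ℝ)) := by
              have := hfac n
              gcongr
              exacts [hτ.1.le, hτ.2]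
          _ = x ^ (2 * n) / (2 ^ n * (n.factorial:ℝ)) * (x - τ) ^ (α - 1) := by ring
      calc ∫ τ in Set.Ioc 0 x, ‖g n τ‖ ≤ _ := hle
        _ = ((x ^ 2 / 2) ^ n / n.factorial) * ∫ τ in Set.Ioc 0 x, (x - τ) ^ (α - 1) := by
            rw [MeasureTheory.integral_const_mul]
            congr 1
            rw [pow_mul]
            field_simp
            rw [div_pow]
            field_simp
  -- summability of the series a
  have hΓa : (0:ℝ) < Real.Gamma α := Real.Gamma_pos_of_pos hα
  have hSa : Summable a := by
    have h1 : Summable (fun n => ∫ τ in Set.Ioc 0 x, g n τ) :=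
      hS1.of_norm_bounded fun n => norm_integral_le_integral_norm _
    have h2 : a = fun n => (Real.Gamma α)⁻¹ * ∫ τ in Set.Ioc 0 x, g n τ := by
      funext n
      rw [hval n, inv_mul_cancel_left₀ hΓa.ne']
    rw [h2]
    exact h1.mul_left _
  refine ⟨hSa, ?_⟩
  -- pointwise series expansion
  have hpt : ∀ τ : ℝ, (x - τ) ^ (α - 1) * Real.exp (-τ ^ 2 / 2) = ∑' n : ℕ, g n τ := by
    intro τ
    have hexp : Real.exp (-τ ^ 2 / 2) = ∑' n : ℕ, (-τ ^ 2 / 2) ^ n / n.factorial := by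
      rw [Real.exp_eq_exp_ℝ, NormedSpace.exp_eq_tsum_div]
    rw [hexp, ← tsum_mul_left]
    congr 1
    funext n
    rw [hg]
    simp only
    rw [div_pow, neg_pow, pow_mul]
    have h2n : ((2:ℝ) ^ n) ≠ 0 := by positivity
    have hfn : ((n.factorial : ℝ)) ≠ 0 := by positivity
    field_simp
  -- main computation
  rw [intervalIntegral.integral_of_le hx.le]
  rw [show ∫ τ in Set.Ioc 0 x, (x - τ) ^ (α - 1) * Real.exp (-τ ^ 2 / 2) =
      ∫ τ in Set.Ioc 0 x, ∑' n : ℕ, g n τ from integral_congr_ae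
        (Filter.Eventually.of_forall fun τ => hpt τ)]
  rw [← MeasureTheory.integral_tsum_of_summable_integral_norm hint hS1]
  rw [show (∑' n : ℕ, ∫ τ in Set.Ioc 0 x, g n τ) = ∑' n : ℕ, Real.Gamma α * a n from
    tsum_congr fun n => hval n]
  rw [tsum_mul_left, one_div, inv_mul_cancel_left₀ hΓa.ne']
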